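/- Let H be the graph on vertices {u, v, w, a, b, c} with edges: two parallel edges between v and w, the edge cw, edges ua, ub, uc, and edges av, bv. Then L(H) has a K_5-minor but no K_5-immersion. -/

import Mathlib

/-- A multigraph: a type of vertices, a type of edges, an endpoints map,
and no loops. Parallel edges are allowed. -/
structure MG : Type 1 where
  V : Type
  E : Type
  ends : E → Sym2 V
  noLoop : ∀ e, ¬ (ends e).IsDiag

namespace MG

/-- Two vertices are adjacent if some edge joins them. -/
def Adjv (G : MG) (x y : G.V) : Prop := ∃ e, G.ends e = s(x, y)

/-- Isomorphism of multigraphs. -/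
def Iso (G H : MG) : Prop :=
  ∃ (fv : G.V ≃ H.V) (fe : G.E ≃ H.E), ∀ e, H.ends (fe e) = Sym2.map fv (G.ends e)

/-- `H` is (isomorphic to) a subgraph of `G`. -/
def IsSubgraphOf (H G : MG) : Prop :=
  ∃ (fv : H.V ↪ G.V) (fe : H.E ↪ G.E), ∀ e, G.ends (fe e) = Sym2.map fv (H.ends e)

/-- The multigraph obtained from `G` by deleting the edges `e₁, e₂` and adding a
new edge with endpoints `u, w`. -/
def splitOff (G : MG) (e₁ e₂ : G.E) (u w : G.V) (huw : u ≠ w) : MG where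
  V := G.V
  E := {e : G.E // e ≠ e₁ ∧ e ≠ e₂} ⊕ Unit
  ends := fun x => match x with
    | Sum.inl e => G.ends e.1
    | Sum.inr _ => s(u, w)
  noLoop := by
    rintro (e | e)
    · exact G.noLoop e.1
    · simpa [Sym2.mk_isDiag_iff] using huw

/-- `G'` is obtained from `G` by splitting off one pair of adjacent edges. -/
def SplitStep (G G' : MG) : Prop :=
  ∃ (e₁ e₂ : G.E) (u v w : G.V) (huw : u ≠ w),
    e₁ ≠ e₂ ∧ G.ends e₁ = s(u, v) ∧ G.ends e₂ = s(v, w) ∧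
      Iso G' (G.splitOff e₁ e₂ u w huw)

/-- `G` has an `H`-immersion: `H` can be obtained from a subgraph of `G` by
splitting off pairs of adjacent edges and removing isolated vertices. -/
def Immersion (G H : MG) : Prop :=
  ∃ G₀ G₁ : MG, G₀.IsSubgraphOf G ∧ Relation.ReflTransGen SplitStep G₀ G₁ ∧
    ∃ (fv : H.V ↪ G₁.V) (fe : H.E ≃ G₁.E),
      (∀ e, G₁.ends (fe e) = Sym2.map fv (H.ends e)) ∧
      ∀ v : G₁.V, v ∉ Set.range fv → ∀ e, v ∉ G₁.ends e

/-- A set of vertices induces a connected subgraph. -/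
def ConnIn (G : MG) (S : Set G.V) : Prop :=
  ∀ a ∈ S, ∀ b ∈ S, Relation.ReflTransGen (fun x y => x ∈ S ∧ y ∈ S ∧ G.Adjv x y) a b

/-- `G` has an `H`-minor (branch set formulation of contracting edges in a
subgraph of `G`). -/
def Minor (G H : MG) : Prop :=
  ∃ β : H.V → Set G.V,
    (∀ u, (β u).Nonempty) ∧ (∀ u, G.ConnIn (β u)) ∧
    (Pairwise fun u v => Disjoint (β u) (β v)) ∧
    ∃ η : H.E ↪ G.E, ∀ e u v, H.ends e = s(u, v) →
      ∃ a ∈ β u, ∃ b ∈ β v, G.ends (η e) = s(a, b)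

/-- `G` is a connected multigraph. -/
def Connected (G : MG) : Prop :=
  Nonempty G.V ∧ ∀ a b : G.V, Relation.ReflTransGen G.Adjv a b

/-- The degree of `v` is at least `k`. -/
def degGE (G : MG) (v : G.V) (k : ℕ) : Prop :=
  Nonempty (Fin k ↪ {e : G.E // v ∈ G.ends e})

/-- The line graph of a multigraph: a vertex for each edge, two vertices
adjacent iff the corresponding edges share an endpoint. -/
def lineGraph (G : MG) : SimpleGraph G.E where
  Adj e f := e ≠ f ∧ ∃ v, v ∈ G.ends e ∧ v ∈ G.ends f
  symm := ⟨by rintro e f ⟨h, v, h1, h2⟩; exact ⟨Ne.symm h, v, h2, h1⟩⟩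
  loopless := ⟨by rintro e ⟨h, _⟩; exact h rfl⟩

/-- `mG`: each edge of `G` is replaced by `m` parallel copies. -/
def mul (G : MG) (m : ℕ) : MG where
  V := G.V
  E := G.E × Fin m
  ends := fun p => G.ends p.1
  noLoop := fun p => G.noLoop p.1

/-- `G` has a proper edge colouring with `n` colours. -/
def EdgeColorable (G : MG) (n : ℕ) : Prop :=
  ∃ C : G.E → Fin n, ∀ e f, e ≠ f → (∃ v, v ∈ G.ends e ∧ v ∈ G.ends f) → C e ≠ C f

/-- The chromatic index of `G`. -/
noncomputable def chromIndex (G : MG) : ℕ := sInf {n | G.EdgeColorable n}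

/-- A path between edges: a nonempty sequence of distinct edges in which
consecutive edges are adjacent (this corresponds exactly to a path in the
line graph). -/
structure EPath (G : MG) where
  edges : List G.E
  ne : edges ≠ []
  nodup : edges.Nodup
  chain : edges.Chain' fun a b => ∃ v, v ∈ G.ends a ∧ v ∈ G.ends b

/-- First edge of an edge-path. -/
def EPath.firstE {G : MG} (P : EPath G) : G.E := P.edges.head P.ne

/-- Last edge of an edge-path. -/
def EPath.lastE {G : MG} (P : EPath G) : G.E := P.edges.getLast P.ne

/-- The (unordered) pair of edges `p` occurs consecutively in `P`; that is,
the corresponding 2-edge path is a subpath of `P`. -/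
def EPath.Adj2 {G : MG} (P : EPath G) (p : Sym2 G.E) : Prop :=
  ∃ l₁ a b l₂, P.edges = l₁ ++ a :: b :: l₂ ∧ p = s(a, b)

/-- A set of paths is semi-edge-disjoint: every 2-edge path is a subpath of at
most one path of the set. -/
def SED (G : MG) (S : Set (EPath G)) : Prop :=
  ∀ P ∈ S, ∀ Q ∈ S, ∀ p, P.Adj2 p → Q.Adj2 p → P = Q

/-- `H` contains `t` distinct edges and a path between each pair of them such
that this set of paths is semi-edge-disjoint. -/
def CliqueSED (H : MG) (t : ℕ) : Prop :=
  ∃ (f : Fin t ↪ H.E) (P : (i j : Fin t) → i < j → EPath H),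
    (∀ i j h, (P i j h).firstE = f i ∧ (P i j h).lastE = f j) ∧
    H.SED {Q | ∃ i j h, Q = P i j h}

/-- A path in a multigraph, recorded by its vertex sequence (without
repetitions) and edge sequence. -/
structure VPath (G : MG) where
  verts : List G.V
  edges : List G.E
  hlen : verts.length = edges.length + 1
  nodup : verts.Nodup
  hends : ∀ (i : ℕ) (h : i < edges.length),
    G.ends (edges.get ⟨i, h⟩) =
      s(verts.get ⟨i, by omega⟩, verts.get ⟨i + 1, by omega⟩)

/-- First vertex of a path. -/
def VPath.first {G : MG} (P : VPath G) : G.V :=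
  P.verts.head (by have h := P.hlen; intro hnil; rw [hnil] at h; simp at h)

/-- Last vertex of a path. -/
def VPath.last {G : MG} (P : VPath G) : G.V :=
  P.verts.getLast (by have h := P.hlen; intro hnil; rw [hnil] at h; simp at h)

/-- A cycle in a multigraph: distinct vertices `v 0, …, v (n-1)` and distinct
edges `e 0, …, e (n-1)` with `e i` joining `v i` to `v (i+1 mod n)`. -/
structure Cycle (G : MG) where
  n : ℕ
  hn : 2 ≤ n
  v : Fin n → G.V
  e : Fin n → G.E
  vinj : Function.Injective v
  einj : Function.Injective e
  hends : ∀ i : Fin n,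
    G.ends (e i) =
      s(v i, v ⟨(i.1 + 1) % n, Nat.mod_lt _ (Nat.lt_of_le_of_lt (Nat.zero_le _) i.isLt)⟩)

/-- `G` has a topological `H`-minor: branch vertices joined by internally
disjoint paths. -/
def TopMinor (G H : MG) : Prop :=
  ∃ (fv : H.V ↪ G.V) (P : H.E → VPath G),
    (∀ e, s((P e).first, (P e).last) = Sym2.map fv (H.ends e)) ∧
    (∀ e, ∀ x ∈ (P e).verts.tail.dropLast, x ∉ Set.range fv) ∧
    (∀ e f, e ≠ f → ∀ x, x ∈ (P e).verts → x ∈ (P f).verts → x ∈ Set.range fv) ∧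
    (∀ e f, e ≠ f → ∀ x ∈ (P e).edges, x ∉ (P f).edges)

/-- A set of edges spans a connected subgraph. -/
def ConnEdges (G : MG) (S : Set G.E) : Prop :=
  ∀ e ∈ S, ∀ f ∈ S,
    Relation.ReflTransGen (fun a b => a ∈ S ∧ b ∈ S ∧ ∃ v, v ∈ G.ends a ∧ v ∈ G.ends b) e f

end MG

/-- A simple graph regarded as a multigraph. -/
def SimpleGraph.toMG {V : Type} (G : SimpleGraph V) : MG where
  V := V
  E := G.edgeSet
  ends := fun e => e.1
  noLoop := fun e => G.not_isDiag_of_mem_edgeSet e.2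

/-- The complete graph `K_t` as a multigraph. -/
def completeMG (t : ℕ) : MG := (⊤ : SimpleGraph (Fin t)).toMG

/-- The graph of Figure 1: vertices `u=0, v=1, w=2, a=3, b=4, c=5`, with two
parallel edges `vw`, edge `cw`, edges `ua, ub, uc`, and edges `av, bv`. -/
def fig1 : MG where
  V := Fin 6
  E := Fin 8
  ends := ![s(1, 2), s(1, 2), s(5, 2), s(0, 3), s(0, 4), s(0, 5), s(3, 1), s(4, 1)]
  noLoop := by decide


/-! ### Auxiliary material for the proof -/

instance : DecidableEq fig1.E := inferInstanceAs (DecidableEq (Fin 8))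
instance : DecidableEq fig1.V := inferInstanceAs (DecidableEq (Fin 6))
instance : Fintype fig1.V := inferInstanceAs (Fintype (Fin 6))
instance : Fintype fig1.E := inferInstanceAs (Fintype (Fin 8))

instance : DecidableRel (MG.lineGraph fig1).Adj :=
  fun e f => decidable_of_iff (e ≠ f ∧ ∃ v, v ∈ fig1.ends e ∧ v ∈ fig1.ends f) Iff.rfl

/-- The line graph of `fig1`, as a multigraph. -/
abbrev LG : MG := SimpleGraph.toMG fig1.lineGraph

instance (v : Fin 8) : DecidablePred (fun e : (MG.lineGraph fig1).edgeSet => v ∈ LG.ends e) :=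
  fun e => Sym2.Mem.decidable (α := fig1.E) v e.1

instance (z : Sym2 (Fin 8)) : Decidable (z ∈ (MG.lineGraph fig1).edgeSet) :=
  (inferInstance : DecidablePred (· ∈ (MG.lineGraph fig1).edgeSet)) z

instance (x y : Fin 8) : Decidable ((MG.lineGraph fig1).Adj x y) :=
  (inferInstance : DecidableRel (MG.lineGraph fig1).Adj) x y

instance : DecidableEq (SimpleGraph.toMG fig1.lineGraph).V :=
  inferInstanceAs (DecidableEq (Fin 8))
instance : Fintype (SimpleGraph.toMG fig1.lineGraph).V :=
  inferInstanceAs (Fintype (Fin 8))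

instance (v : (SimpleGraph.toMG fig1.lineGraph).V) :
    DecidablePred (fun e : (SimpleGraph.toMG fig1.lineGraph).E =>
      v ∈ (SimpleGraph.toMG fig1.lineGraph).ends e) :=
  fun e => Sym2.Mem.decidable (α := fig1.E) v (e : (MG.lineGraph fig1).edgeSet).1

/-- Branch sets (as boolean matrix). -/
def bmat : Fin 5 → Fin 8 → Bool :=
  ![![true, false, false, false, false, false, false, false],
    ![false, true, false, false, false, false, false, false],
    ![false, false, true, false, false, true, false, false],
    ![false, false, false, true, false, false, true, false],
    ![false, false, false, false, true, false, false, true]]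

def Bset : Fin 5 → Set (Fin 8) := fun i => {x | bmat i x = true}

/-- The map on pairs used for the `K₅`-minor. -/
def Mrow : Fin 5 → Fin 5 → Sym2 (Fin 8) :=
  ![![s(0,1), s(0,1), s(0,2), s(0,6), s(0,7)],
    ![s(0,1), s(0,1), s(1,2), s(1,6), s(1,7)],
    ![s(0,2), s(1,2), s(0,1), s(5,3), s(5,4)],
    ![s(0,6), s(1,6), s(5,3), s(0,1), s(6,7)],
    ![s(0,7), s(1,7), s(5,4), s(6,7), s(0,1)]]

def mmap : Sym2 (Fin 5) → Sym2 (Fin 8) := Sym2.lift ⟨Mrow, by decide⟩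

lemma mmap_inj : ∀ z z' : Sym2 (Fin 5), ¬z.IsDiag → ¬z'.IsDiag → mmap z = mmap z' → z = z' := by
  decide

lemma mmap_mem : ∀ z : Sym2 (Fin 5), ¬z.IsDiag → mmap z ∈ (MG.lineGraph fig1).edgeSet := by
  decide

lemma bmat_ends : ∀ u v : Fin 5, u ≠ v →
    ∃ a : Fin 8, bmat u a = true ∧ ∃ b : Fin 8, bmat v b = true ∧ Mrow u v = s(a, b) := by
  decide

lemma adjv_symm {G : MG} {a b : G.V} (h : G.Adjv a b) : G.Adjv b a := by
  obtain ⟨e, he⟩ := h; exact ⟨e, he.trans (Sym2.eq_swap)⟩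

lemma connSingle (G : MG) (a : G.V) (S : Set G.V) (hS : ∀ x, x ∈ S ↔ x = a) :
    G.ConnIn S := by
  intro x hx y hy
  rcases (hS x).1 hx with rfl
  rcases (hS y).1 hy with rfl
  exact .refl

lemma connPair (G : MG) (a b : G.V) (S : Set G.V) (hS : ∀ x, x ∈ S ↔ x = a ∨ x = b)
    (h : G.Adjv a b) : G.ConnIn S := by
  have ha : a ∈ S := (hS a).2 (Or.inl rfl)
  have hb : b ∈ S := (hS b).2 (Or.inr rfl)
  intro x hx y hy
  rcases (hS x).1 hx with rfl | rfl <;> rcases (hS y).1 hy with rfl | rfl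
  · exact .refl
  · exact .single ⟨ha, hb, h⟩
  · exact .single ⟨hb, ha, adjv_symm h⟩
  · exact .refl

lemma adjvLG (x y : Fin 8) (h : (MG.lineGraph fig1).Adj x y) : LG.Adjv x y :=
  ⟨⟨s(x, y), h⟩, rfl⟩

/-! ### Degree transfer lemmas -/

lemma sub_deg {H G : MG} (fv : H.V ↪ G.V) (fe : H.E ↪ G.E)
    (hc : ∀ e, G.ends (fe e) = Sym2.map fv (H.ends e)) (v : H.V) (k : ℕ)
    (h : H.degGE v k) : G.degGE (fv v) k := by
  obtain ⟨d⟩ := h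
  refine ⟨⟨fun j => ⟨fe (d j).1, ?_⟩, fun j j' hjj => ?_⟩⟩
  · rw [hc]
    exact (Sym2.mem_map).2 ⟨v, (d j).2, rfl⟩
  · exact d.injective (Subtype.ext (fe.injective (congrArg Subtype.val hjj)))

open Classical in
/-- Edge transfer for a splitOff step. -/
noncomputable def psi {G : MG} (e₁ e₂ : G.E) (u w : G.V) (huw : u ≠ w) (v₀ : G.V)
    (h1 : G.ends e₁ = s(u, v₀)) (h2 : G.ends e₂ = s(v₀, w)) (y : G.V)
    (x : {x : (G.splitOff e₁ e₂ u w huw).E // y ∈ (G.splitOff e₁ e₂ u w huw).ends x}) :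
    {e : G.E // y ∈ G.ends e} :=
  match x with
  | ⟨Sum.inl e, hx⟩ => ⟨e.1, hx⟩
  | ⟨Sum.inr _, hx⟩ =>
      if hyu : y = u then ⟨e₁, by rw [h1, hyu]; exact Sym2.mem_mk_left u v₀⟩
      else ⟨e₂, by
        have hm : y = u ∨ y = w := Sym2.mem_iff.1 hx
        rw [h2, hm.resolve_left hyu]
        exact Sym2.mem_mk_right v₀ w⟩

lemma psi_inj {G : MG} (e₁ e₂ : G.E) (u w : G.V) (huw : u ≠ w) (v₀ : G.V)
    (h1 : G.ends e₁ = s(u, v₀)) (h2 : G.ends e₂ = s(v₀, w)) (y : G.V) :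
    Function.Injective (psi e₁ e₂ u w huw v₀ h1 h2 y) := by
  rintro ⟨(e | a), hx⟩ ⟨(e' | a'), hx'⟩ hee
  · simp only [psi] at hee
    have h0 : (e : G.E) = e' := Subtype.mk_eq_mk.1 hee
    exact Subtype.ext (congrArg Sum.inl (Subtype.ext h0))
  · exfalso
    simp only [psi] at hee
    split_ifs at hee with hyu
    · exact e.2.1 (Subtype.mk_eq_mk.1 hee)
    · exact e.2.2 (Subtype.mk_eq_mk.1 hee)
  · exfalso
    simp only [psi] at hee
    split_ifs at hee with hyu
    · exact e'.2.1 (Subtype.mk_eq_mk.1 hee).symm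
    · exact e'.2.2 (Subtype.mk_eq_mk.1 hee).symm
  · cases a; cases a'; exact Subtype.ext rfl

lemma split_deg {G G' : MG} (h : MG.SplitStep G G') :
    ∃ φ : G'.V → G.V, Function.Injective φ ∧
      ∀ v k, G'.degGE v k → G.degGE (φ v) k := by
  obtain ⟨e₁, e₂, u, v₀, w, huw, hne, h1, h2, gv, ge, hge⟩ := h
  refine ⟨gv, gv.injective, fun v k hk => ?_⟩
  have hk' : (G.splitOff e₁ e₂ u w huw).degGE (gv v) k :=
    sub_deg gv.toEmbedding ge.toEmbedding hge v k hk
  obtain ⟨d⟩ := hk'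
  exact ⟨⟨fun j => psi e₁ e₂ u w huw v₀ h1 h2 (gv v) (d j),
    fun j j' hjj => d.injective (psi_inj e₁ e₂ u w huw v₀ h1 h2 (gv v) hjj)⟩⟩

lemma chain_deg {G₀ G₁ : MG} (h : Relation.ReflTransGen MG.SplitStep G₀ G₁) :
    ∃ φ : G₁.V → G₀.V, Function.Injective φ ∧
      ∀ v k, G₁.degGE v k → G₀.degGE (φ v) k := by
  induction h with
  | refl => exact ⟨id, Function.injective_id, fun v k => id⟩
  | tail _ hbc ih =>
      obtain ⟨φ, hφ, hφd⟩ := ih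
      obtain ⟨ψ, hψ, hψd⟩ := split_deg hbc
      exact ⟨φ ∘ ψ, hφ.comp hψ, fun v k hk => hφd _ _ (hψd _ _ hk)⟩

lemma bm0 : ∀ x : Fin 8, bmat 0 x = true ↔ x = 0 := by decide
lemma bm1 : ∀ x : Fin 8, bmat 1 x = true ↔ x = 1 := by decide
lemma bm2 : ∀ x : Fin 8, bmat 2 x = true ↔ x = 2 ∨ x = 5 := by decide
lemma bm3 : ∀ x : Fin 8, bmat 3 x = true ↔ x = 3 ∨ x = 6 := by decide
lemma bm4 : ∀ x : Fin 8, bmat 4 x = true ↔ x = 4 ∨ x = 7 := by decide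
lemma bdisj : ∀ i j : Fin 5, ¬i = j → ∀ x : Fin 8,
    bmat i x = true → bmat j x = true → False := by decide


instance : Fintype (SimpleGraph.toMG fig1.lineGraph).E :=
  inferInstanceAs (Fintype (MG.lineGraph fig1).edgeSet)

instance (v : (SimpleGraph.toMG fig1.lineGraph).V) :
    Fintype {e : (SimpleGraph.toMG fig1.lineGraph).E //
      v ∈ (SimpleGraph.toMG fig1.lineGraph).ends e} :=
  Subtype.fintype _

instance (v : (SimpleGraph.toMG fig1.lineGraph).V) (x : Fin 8) : Decidable (v = x) :=
  (inferInstance : DecidableEq (Fin 8)) v x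

lemma deg_bound : ∀ v : (SimpleGraph.toMG fig1.lineGraph).V,
    4 ≤ Fintype.card {e : (SimpleGraph.toMG fig1.lineGraph).E //
        v ∈ (SimpleGraph.toMG fig1.lineGraph).ends e} →
    v = (0 : Fin 8) ∨ v = (1 : Fin 8) ∨ v = (6 : Fin 8) ∨ v = (7 : Fin 8) := by
  decide


lemma bnonempty : ∀ i : Fin 5, (Bset i).Nonempty := by
  intro i
  fin_cases i
  exacts [⟨0, rfl⟩, ⟨1, rfl⟩, ⟨2, rfl⟩, ⟨3, rfl⟩, ⟨4, rfl⟩]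

lemma bconn : ∀ i : Fin 5, LG.ConnIn (Bset i) := by
  intro i
  fin_cases i
  · exact connSingle LG (0 : Fin 8) _ bm0
  · exact connSingle LG (1 : Fin 8) _ bm1
  · exact connPair LG (2 : Fin 8) (5 : Fin 8) _ bm2 (adjvLG 2 5 (by decide))
  · exact connPair LG (3 : Fin 8) (6 : Fin 8) _ bm3 (adjvLG 3 6 (by decide))
  · exact connPair LG (4 : Fin 8) (7 : Fin 8) _ bm4 (adjvLG 4 7 (by decide))

lemma bpairwise : Pairwise fun u v : Fin 5 => Disjoint (Bset u) (Bset v) := by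
  intro i j hij
  rw [Set.disjoint_left]
  intro x hxi hxj
  exact bdisj i j hij x hxi hxj

/-- The edge map for the `K₅`-minor. -/
def etaE : (⊤ : SimpleGraph (Fin 5)).edgeSet ↪ (MG.lineGraph fig1).edgeSet where
  toFun e := ⟨mmap e.1, mmap_mem e.1 (SimpleGraph.not_isDiag_of_mem_edgeSet _ e.2)⟩
  inj' e e' h :=
    Subtype.ext (mmap_inj e.1 e'.1
      (SimpleGraph.not_isDiag_of_mem_edgeSet _ e.2)
      (SimpleGraph.not_isDiag_of_mem_edgeSet _ e'.2)
      (Subtype.mk_eq_mk.1 h))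

lemma eta_cond : ∀ (e : (⊤ : SimpleGraph (Fin 5)).edgeSet) (u v : Fin 5),
    (e : Sym2 (Fin 5)) = s(u, v) →
    ∃ a ∈ Bset u, ∃ b ∈ Bset v, (etaE e).1 = s(a, b) := by
  intro e u v heq
  have hd := SimpleGraph.not_isDiag_of_mem_edgeSet _ e.2
  have huv : u ≠ v := by
    rw [heq] at hd
    intro h; exact hd (by simp [h])
  obtain ⟨a, ha, b, hb, hM⟩ := bmat_ends u v huv
  refine ⟨a, ha, b, hb, ?_⟩
  show mmap e.1 = s(a, b)
  rw [heq]
  show Mrow u v = s(a, b)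
  exact hM

/-- `L(fig1)` has a `K₅`-minor but no `K₅`-immersion. -/
theorem fig1_K5_minor_not_immersion :
    MG.Minor (SimpleGraph.toMG fig1.lineGraph) (completeMG 5) ∧
    ¬ MG.Immersion (SimpleGraph.toMG fig1.lineGraph) (completeMG 5) := by
  constructor
  · -- the K₅-minor
    exact ⟨Bset, bnonempty, bconn, bpairwise, etaE, eta_cond⟩
  · -- no K₅-immersion
    rintro ⟨G₀, G₁, ⟨sv, se, hsub⟩, hchain, fv, fe, hce, -⟩
    obtain ⟨φ, hφ, hφd⟩ := chain_deg hchain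
    have hdeg : ∀ i : Fin 5, MG.degGE G₁ (fv i) 4 := by
      intro i
      refine ⟨⟨fun j => ⟨fe ⟨s(i, i.succAbove j), ?_⟩, ?_⟩, ?_⟩⟩
      · rw [SimpleGraph.mem_edgeSet]
        exact (Fin.succAbove_ne i j).symm
      · erw [hce]
        exact Sym2.mem_map.2 ⟨i, Sym2.mem_mk_left _ _, rfl⟩
      · intro j j' hjj
        have h1 := fe.injective (Subtype.mk_eq_mk.1 hjj)
        have h2 : s(i, i.succAbove j) = s(i, i.succAbove j') := Subtype.mk_eq_mk.1 h1
        exact Fin.succAbove_right_injective (Sym2.congr_right.1 h2)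
    have hdegL : ∀ i : Fin 5, MG.degGE LG (sv (φ (fv i))) 4 := fun i =>
      sub_deg sv se hsub _ 4 (hφd _ 4 (hdeg i))
    have hmem4 : ∀ i : Fin 5, (sv (φ (fv i)) : Fin 8) ∈ ({0, 1, 6, 7} : Finset (Fin 8)) := by
      intro i
      obtain ⟨d⟩ := hdegL i
      have hcard : 4 ≤ Fintype.card
          {e : (SimpleGraph.toMG fig1.lineGraph).E //
            sv (φ (fv i)) ∈ (SimpleGraph.toMG fig1.lineGraph).ends e} := by
        simpa using Fintype.card_le_of_embedding d
      rcases deg_bound _ hcard with h | h | h | h <;> simp [h] <;> decide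
    have hginj : Function.Injective (fun i : Fin 5 => (sv (φ (fv i)) : Fin 8)) :=
      sv.injective.comp (hφ.comp fv.injective)
    have hle := Finset.card_le_card_of_injOn
      (s := (Finset.univ : Finset (Fin 5))) (t := ({0, 1, 6, 7} : Finset (Fin 8)))
      (fun i : Fin 5 => (sv (φ (fv i)) : Fin 8))
      (fun i _ => hmem4 i) hginj.injOn
    simp [Finset.card_univ] at hle
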